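/- Let n ≥ 2 and let 𝓛 = {L_1,…,L_k} be a lumping of the Insect Markov chain on X^n. For each part L_i, let L_i' ⊆ X^{n−1} be the set of words obtained from the elements of L_i by deleting the last letter, i.e. L_i' = {(x_1,…,x_{n−1}) : (x_1,…,x_n) ∈ L_i}. If L_i' ∩ L_j' ≠ ∅ for some i, j, then L_i' = L_j'. -/

import Mathlib

open scoped Classical

/-- The ultrametric distance on `X^n`:
`d(x,y) = n − max{m ∈ {0,…,n} : x 0 = y 0, …, x (m-1) = y (m-1)}`. -/
noncomputable def treeDist {X : Type*} {n : ℕ} (x y : Fin n → X) : ℕ :=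
  n - ((Finset.range (n + 1)).filter
        (fun m => ∀ i : Fin n, (i : ℕ) < m → x i = y i)).sup id

/-- The coefficients of the Insect Markov chain on the `q`-ary rooted tree of depth `n`:
`α_0 = 1`, `α_j = (q^j − 1)/(q^{j+1} − 1)` for `1 ≤ j ≤ n−1`, and `α_n = 0`. -/
noncomputable def insectAlpha (q n : ℕ) (j : ℕ) : ℝ :=
  if j = 0 then 1
  else if j ≤ n - 1 then ((q : ℝ) ^ j - 1) / ((q : ℝ) ^ (j + 1) - 1)
  else 0

/-- The transition probabilities of the Insect Markov chain on `X^n` (`q = |X|`):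
`p(x,y) = ∑_{i = max(d(x,y),1)}^{n} q^{−i} · α_1⋯α_{i−1} · (1 − α_i)`. -/
noncomputable def insectP {X : Type*} [Fintype X] {n : ℕ} (x y : Fin n → X) : ℝ :=
  ∑ i ∈ Finset.Icc (max (treeDist x y) 1) n,
    (1 / (Fintype.card X : ℝ) ^ i)
      * (∏ t ∈ Finset.Ico 1 i, insectAlpha (Fintype.card X) n t)
      * (1 - insectAlpha (Fintype.card X) n i)

-- auxiliary
lemma insectAlpha_nonneg {q : ℕ} (hq : 2 ≤ q) (N j : ℕ) : 0 ≤ insectAlpha q N j := by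
  have hq1 : (1:ℝ) ≤ (q:ℝ) := by exact_mod_cast Nat.one_le_of_lt hq
  unfold insectAlpha
  split_ifs
  · norm_num
  · apply div_nonneg
    · have : (1:ℝ) ≤ (q:ℝ)^j := one_le_pow₀ hq1
      linarith
    · have : (1:ℝ) ≤ (q:ℝ)^(j+1) := one_le_pow₀ hq1
      linarith
  · exact le_refl _

lemma insectAlpha_le_one {q : ℕ} (hq : 2 ≤ q) (N j : ℕ) : insectAlpha q N j ≤ 1 := by
  have hq1 : (1:ℝ) < (q:ℝ) := by exact_mod_cast hq
  unfold insectAlpha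
  split_ifs
  · exact le_refl _
  · rw [div_le_one]
    · have : (q:ℝ)^j ≤ (q:ℝ)^(j+1) := pow_le_pow_right₀ (le_of_lt hq1) (Nat.le_succ j)
      linarith
    · have : (1:ℝ) < (q:ℝ)^(j+1) := one_lt_pow₀ hq1 (Nat.succ_ne_zero j)
      linarith
  · norm_num

lemma insectAlpha_one_lt_one {q N : ℕ} (hq : 2 ≤ q) (hN : 2 ≤ N) : insectAlpha q N 1 < 1 := by
  have hq1 : (1:ℝ) < (q:ℝ) := by exact_mod_cast hq
  unfold insectAlpha
  rw [if_neg one_ne_zero, if_pos (by omega)]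
  rw [div_lt_one]
  · have : (q:ℝ)^1 < (q:ℝ)^(1+1) := pow_lt_pow_right₀ hq1 (by norm_num)
    linarith
  · have : (1:ℝ) < (q:ℝ)^(1+1) := one_lt_pow₀ hq1 (by norm_num)
    linarith

lemma treeDist_le_iff {X : Type*} {N : ℕ} (x y : Fin N → X) (i : ℕ) :
    treeDist x y ≤ i ↔ ∀ j : Fin N, (j : ℕ) < N - i → x j = y j := by
  classical
  set s := (Finset.range (N + 1)).filter
      (fun m => ∀ i : Fin N, (i : ℕ) < m → x i = y i) with hs
  have h0 : 0 ∈ s := by simp [hs]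
  obtain ⟨b, hb, hbe⟩ := Finset.exists_mem_eq_sup s ⟨0, h0⟩ id
  have hMmem : s.sup id ∈ s := by rw [hbe]; exact hb
  have hMprop : ∀ j : Fin N, (j : ℕ) < s.sup id → x j = y j :=
    (Finset.mem_filter.mp hMmem).2
  have hMle : s.sup id ≤ N := by
    have := (Finset.mem_range.mp (Finset.mem_filter.mp hMmem).1); omega
  have hT : treeDist x y = N - s.sup id := rfl
  constructor
  · intro h j hj
    exact hMprop j (by omega)
  · intro h
    have hmem : N - i ∈ s := Finset.mem_filter.mpr
      ⟨Finset.mem_range.mpr (by omega), h⟩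
    have := Finset.le_sup (f := id) hmem
    simp only [id] at this
    omega

lemma agree_proj {X : Type*} {n : ℕ} (x y : Fin (n + 1) → X) (i : ℕ) (hi : 1 ≤ i) :
    (∀ j : Fin (n + 1), (j : ℕ) < n + 1 - i → x j = y j) ↔
    (∀ j : Fin n, (j : ℕ) < n + 1 - i → x (Fin.castSucc j) = y (Fin.castSucc j)) := by
  constructor
  · intro h j hj
    exact h (Fin.castSucc j) (by simpa using hj)
  · intro h j hj
    have hjn : (j : ℕ) < n := by omega
    have := h ⟨(j : ℕ), hjn⟩ (by simpa using hj)
    simpa [Fin.castSucc, Fin.ext_iff] using this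

/-- coefficient of the insect chain -/
noncomputable def Tco (q N : ℕ) (i : ℕ) : ℝ :=
  (1 / (q : ℝ) ^ i) * (∏ t ∈ Finset.Ico 1 i, insectAlpha q N t)
    * (1 - insectAlpha q N i)

lemma Tco_nonneg {q : ℕ} (hq : 2 ≤ q) (N i : ℕ) : 0 ≤ Tco q N i := by
  unfold Tco
  apply mul_nonneg
  apply mul_nonneg
  · positivity
  · exact Finset.prod_nonneg fun t _ => insectAlpha_nonneg hq N t
  · have := insectAlpha_le_one hq N i; linarith

lemma Tco_one_pos {q N : ℕ} (hq : 2 ≤ q) (hN : 2 ≤ N) : 0 < Tco q N 1 := by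
  unfold Tco
  rw [Finset.Ico_self, Finset.prod_empty]
  have h1 : (0:ℝ) < (q:ℝ)^1 := by positivity
  have h2 := insectAlpha_one_lt_one hq hN
  have : (0:ℝ) < 1 / (q:ℝ)^1 := by positivity
  nlinarith

/-- indicator of agreement on the first `n+1-i` letters -/
noncomputable def agreeInd {X : Type*} {n : ℕ} (i : ℕ) (u v : Fin n → X) : ℝ :=
  if (∀ j : Fin n, (j : ℕ) < n + 1 - i → u j = v j) then 1 else 0

lemma insectP_eq {X : Type*} [Fintype X] {n : ℕ} (x y : Fin (n + 1) → X) :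
    insectP x y = ∑ i ∈ Finset.Icc 1 (n + 1),
      Tco (Fintype.card X) (n + 1) i
        * agreeInd i (x ∘ Fin.castSucc) (y ∘ Fin.castSucc) := by
  classical
  have h1 : insectP x y = ∑ i ∈ Finset.Icc (max (treeDist x y) 1) (n + 1),
      Tco (Fintype.card X) (n + 1) i := rfl
  rw [h1]
  have h2 : Finset.Icc (max (treeDist x y) 1) (n + 1)
      = (Finset.Icc 1 (n + 1)).filter (fun i => treeDist x y ≤ i) := by
    ext m
    simp only [Finset.mem_Icc, Finset.mem_filter]
    omega
  rw [h2, Finset.sum_filter]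
  apply Finset.sum_congr rfl
  intro m hm
  have hm1 : 1 ≤ m := (Finset.mem_Icc.mp hm).1
  have hiff : treeDist x y ≤ m ↔
      (∀ j : Fin n, (j : ℕ) < n + 1 - m → (x ∘ Fin.castSucc) j = (y ∘ Fin.castSucc) j) := by
    rw [treeDist_le_iff]
    exact agree_proj x y m hm1
  unfold agreeInd
  by_cases hc : treeDist x y ≤ m
  · rw [if_pos hc, if_pos (hiff.mp hc), mul_one]
  · rw [if_neg hc, if_neg (fun h => hc (hiff.mpr h)), mul_zero]

lemma agreeInd_symm {X : Type*} {n : ℕ} (i : ℕ) (u v : Fin n → X) :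
    agreeInd i u v = agreeInd i v u := by
  unfold agreeInd
  congr 1
  simp only [eq_iff_iff]
  constructor <;> intro h j hj <;> exact (h j hj).symm

lemma inner_nonneg {X : Type*} [Fintype X] {n : ℕ} (F : (Fin n → X) → ℝ) (m : ℕ) :
    0 ≤ ∑ u : Fin n → X, ∑ v : Fin n → X, F u * F v * agreeInd m u v := by
  classical
  set g : (Fin n → X) → (Fin n → Option X) := fun u j =>
    if (j : ℕ) < n + 1 - m then some (u j) else none with hg
  have hag : ∀ u v : Fin n → X, agreeInd m u v = if g u = g v then 1 else 0 := by
    intro u v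
    unfold agreeInd
    congr 1
    simp only [eq_iff_iff]
    constructor
    · intro h
      funext j
      simp only [hg]
      split_ifs with hj
      · rw [h j hj]
      · rfl
    · intro h j hj
      have := congrFun h j
      simp only [hg, if_pos hj, Option.some.injEq] at this
      exact this
  set S : (Fin n → Option X) → ℝ :=
    fun c => ∑ u ∈ Finset.univ.filter (fun u => g u = c), F u with hS
  have inner : ∀ u : Fin n → X,
      (∑ v : Fin n → X, F u * F v * agreeInd m u v) = F u * S (g u) := by
    intro u
    rw [hS, Finset.mul_sum, ← Finset.sum_filter_of_ne (f := fun v => F u * F v * agreeInd m u v)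
      (p := fun v => g v = g u)]
    · apply Finset.sum_congr rfl
      intro v hv
      have : g v = g u := (Finset.mem_filter.mp hv).2
      rw [hag, if_pos this.symm, mul_one]
    · intro v _ hne
      by_contra hgv
      apply hne
      rw [hag, if_neg (fun h => hgv h.symm), mul_zero]
  calc ∑ u : Fin n → X, ∑ v : Fin n → X, F u * F v * agreeInd m u v
      = ∑ u : Fin n → X, F u * S (g u) := by
        exact Finset.sum_congr rfl fun u _ => inner u
    _ = ∑ c : Fin n → Option X,
          ∑ u ∈ Finset.univ.filter (fun u => g u = c), F u * S (g u) :=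
        (Finset.sum_fiberwise Finset.univ g (fun u => F u * S (g u))).symm
    _ = ∑ c : Fin n → Option X, S c * S c := by
        apply Finset.sum_congr rfl
        intro c _
        rw [hS, Finset.sum_mul]
        apply Finset.sum_congr rfl
        intro u hu
        rw [(Finset.mem_filter.mp hu).2]
    _ ≥ 0 := Finset.sum_nonneg fun c _ => mul_self_nonneg (S c)

lemma inner_one {X : Type*} [Fintype X] {n : ℕ} (F : (Fin n → X) → ℝ) :
    ∑ u : Fin n → X, ∑ v : Fin n → X, F u * F v * agreeInd 1 u v
      = ∑ u : Fin n → X, F u ^ 2 := by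
  classical
  have hag : ∀ u v : Fin n → X, agreeInd 1 u v = if u = v then 1 else 0 := by
    intro u v
    unfold agreeInd
    congr 1
    simp only [eq_iff_iff]
    constructor
    · intro h
      funext j
      exact h j (by omega)
    · intro h j _
      rw [h]
  apply Finset.sum_congr rfl
  intro u _
  simp only [hag, mul_ite, mul_one, mul_zero]
  rw [Finset.sum_ite_eq Finset.univ u (fun v => F u * F v)]
  simp [sq]


set_option maxHeartbeats 2000000 in
/-- Let `𝓛 = {L_1,…,L_k}` be a lumping of the Insect Markov chain on
`X^{n+1}` (depth `n + 1 ≥ 2`).  For each part `L i` let `L i'` be its image in `X^n` under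
deletion of the last letter.  If `L i' ∩ L j' ≠ ∅`, then `L i' = L j'`. -/
theorem stmt_13 {X : Type*} [Fintype X] {n k : ℕ}
    (hq : 2 ≤ Fintype.card X) (hn : 1 ≤ n)
    (L : Fin k → Finset (Fin (n + 1) → X))
    (hL_nonempty : ∀ s, (L s).Nonempty)
    (hL_part : ∀ x : Fin (n + 1) → X, ∃! s, x ∈ L s)
    (hlump : ∀ r s : Fin k, ∀ x ∈ L r, ∀ x' ∈ L r,
        ∑ y ∈ L s, insectP x y = ∑ y ∈ L s, insectP x' y)
    (i j : Fin k)
    (hmeet : (((L i).image (fun w => w ∘ Fin.castSucc)) ∩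
              ((L j).image (fun w => w ∘ Fin.castSucc))).Nonempty) :
    (L i).image (fun w => w ∘ Fin.castSucc)
      = (L j).image (fun w => w ∘ Fin.castSucc) := by
  classical
  set q := Fintype.card X with hqdef
  set π : (Fin (n + 1) → X) → (Fin n → X) := fun w => w ∘ Fin.castSucc with hπ
  set Qf : (Fin n → X) → (Fin n → X) → ℝ := fun u v =>
    ∑ m ∈ Finset.Icc 1 (n + 1), Tco q (n + 1) m * agreeInd m u v with hQf
  set Φ : Fin k → (Fin n → X) → ℝ := fun s u => ∑ y ∈ L s, Qf u (π y) with hΦdef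
  have hP : ∀ x y : Fin (n + 1) → X, insectP x y = Qf (π x) (π y) := fun x y =>
    insectP_eq x y
  have hΦ : ∀ (s : Fin k) (x : Fin (n + 1) → X),
      ∑ y ∈ L s, insectP x y = Φ s (π x) := by
    intro s x
    simp only [hΦdef]
    exact Finset.sum_congr rfl fun y _ => hP x y
  obtain ⟨w, hw⟩ := hmeet
  rw [Finset.mem_inter] at hw
  obtain ⟨x0, hx0, hx0w⟩ := Finset.mem_image.mp hw.1
  obtain ⟨y0, hy0, hy0w⟩ := Finset.mem_image.mp hw.2
  have hconstI : ∀ (s : Fin k), ∀ x ∈ L i, Φ s (π x) = Φ s w := by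
    intro s x hx
    rw [← hΦ, hlump i s x hx x0 hx0, hΦ]
    exact congrArg (Φ s) hx0w
  have hconstJ : ∀ (s : Fin k), ∀ x ∈ L j, Φ s (π x) = Φ s w := by
    intro s x hx
    rw [← hΦ, hlump j s x hx y0 hy0, hΦ]
    exact congrArg (Φ s) hy0w
  set a : ℝ := ((L i).card : ℝ) with ha
  set b : ℝ := ((L j).card : ℝ) with hb
  have hapos : 0 < a := by
    simp only [ha, Nat.cast_pos, Finset.card_pos]; exact hL_nonempty i
  have hbpos : 0 < b := by
    simp only [hb, Nat.cast_pos, Finset.card_pos]; exact hL_nonempty j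
  set A : (Fin n → X) → ℝ := fun v => ∑ x ∈ L i, if π x = v then (1:ℝ) else 0 with hA
  set B : (Fin n → X) → ℝ := fun v => ∑ x ∈ L j, if π x = v then (1:ℝ) else 0 with hB
  set F : (Fin n → X) → ℝ := fun v => A v / a - B v / b with hF
  -- generic resummation
  have hsum : ∀ (s : Fin k) (h : (Fin n → X) → ℝ),
      (∑ v : Fin n → X, (∑ x ∈ L s, if π x = v then (1:ℝ) else 0) * h v)
        = ∑ x ∈ L s, h (π x) := by
    intro s h
    have : ∀ v : Fin n → X,
        (∑ x ∈ L s, if π x = v then (1:ℝ) else 0) * h v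
          = ∑ x ∈ L s, if π x = v then h v else 0 := by
      intro v
      rw [Finset.sum_mul]
      exact Finset.sum_congr rfl fun x _ => by split_ifs <;> simp
    simp only [this]
    rw [Finset.sum_comm]
    apply Finset.sum_congr rfl
    intro x _
    rw [Finset.sum_ite_eq Finset.univ (π x) h]
    simp
  have hrow : ∀ u : Fin n → X,
      (∑ v : Fin n → X, F v * Qf u v) = Φ i u / a - Φ j u / b := by
    intro u
    have : ∀ v : Fin n → X, F v * Qf u v
        = (A v * Qf u v) / a - (B v * Qf u v) / b := by
      intro v; rw [hF]; ring
    simp only [this]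
    rw [Finset.sum_sub_distrib, ← Finset.sum_div, ← Finset.sum_div]
    rw [hsum i (fun v => Qf u v), hsum j (fun v => Qf u v)]
    try simp only [hΦdef]
  have htotal0 : (∑ u : Fin n → X, ∑ v : Fin n → X, F u * F v * Qf u v) = 0 := by
    have hstep : ∀ u : Fin n → X,
        (∑ v : Fin n → X, F u * F v * Qf u v) = F u * (Φ i u / a - Φ j u / b) := by
      intro u
      rw [← hrow u, Finset.mul_sum]
      try exact Finset.sum_congr rfl fun v _ => by ring
    simp only [hstep]
    set G : (Fin n → X) → ℝ := fun u => Φ i u / a - Φ j u / b with hG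
    have : ∀ u : Fin n → X, F u * G u = (A u * G u) / a - (B u * G u) / b := by
      intro u; rw [hF]; ring
    show ∑ u : Fin n → X, F u * G u = 0
    simp only [this]
    rw [Finset.sum_sub_distrib, ← Finset.sum_div, ← Finset.sum_div]
    rw [hsum i G, hsum j G]
    set δ : ℝ := Φ i w / a - Φ j w / b with hδ
    have h1 : (∑ x ∈ L i, G (π x)) = (L i).card * δ := by
      rw [Finset.sum_congr rfl (fun x hx => by
        simp only [hG, hδ, hconstI i x hx, hconstI j x hx] : ∀ x ∈ L i, G (π x) = δ),
        Finset.sum_const, nsmul_eq_mul]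
    have h2 : (∑ x ∈ L j, G (π x)) = (L j).card * δ := by
      rw [Finset.sum_congr rfl (fun x hx => by
        simp only [hG, hδ, hconstJ i x hx, hconstJ j x hx] : ∀ x ∈ L j, G (π x) = δ),
        Finset.sum_const, nsmul_eq_mul]
    rw [h1, h2, ← ha, ← hb]
    field_simp
    ring
  have hsplit : (∑ u : Fin n → X, ∑ v : Fin n → X, F u * F v * Qf u v)
      = ∑ m ∈ Finset.Icc 1 (n + 1), Tco q (n + 1) m *
          ∑ u : Fin n → X, ∑ v : Fin n → X, F u * F v * agreeInd m u v := by
    have e1 : ∀ u v : Fin n → X, F u * F v * Qf u v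
        = ∑ m ∈ Finset.Icc 1 (n + 1), Tco q (n + 1) m * (F u * F v * agreeInd m u v) := by
      intro u v
      simp only [hQf]
      rw [Finset.mul_sum]
      exact Finset.sum_congr rfl fun m _ => by ring
    calc (∑ u : Fin n → X, ∑ v : Fin n → X, F u * F v * Qf u v)
        = ∑ u : Fin n → X, ∑ v : Fin n → X, ∑ m ∈ Finset.Icc 1 (n + 1),
            Tco q (n + 1) m * (F u * F v * agreeInd m u v) :=
          Finset.sum_congr rfl fun u _ => Finset.sum_congr rfl fun v _ => e1 u v
      _ = ∑ u : Fin n → X, ∑ m ∈ Finset.Icc 1 (n + 1), ∑ v : Fin n → X,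
            Tco q (n + 1) m * (F u * F v * agreeInd m u v) :=
          Finset.sum_congr rfl fun u _ => Finset.sum_comm
      _ = ∑ m ∈ Finset.Icc 1 (n + 1), ∑ u : Fin n → X, ∑ v : Fin n → X,
            Tco q (n + 1) m * (F u * F v * agreeInd m u v) := Finset.sum_comm
      _ = ∑ m ∈ Finset.Icc 1 (n + 1), Tco q (n + 1) m *
            ∑ u : Fin n → X, ∑ v : Fin n → X, F u * F v * agreeInd m u v := by
          apply Finset.sum_congr rfl
          intro m _
          rw [Finset.mul_sum]
          exact Finset.sum_congr rfl fun u _ => by rw [Finset.mul_sum]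
  have hterms0 : ∀ m ∈ Finset.Icc 1 (n + 1), Tco q (n + 1) m *
      (∑ u : Fin n → X, ∑ v : Fin n → X, F u * F v * agreeInd m u v) = 0 := by
    rw [← Finset.sum_eq_zero_iff_of_nonneg]
    · rw [← hsplit, htotal0]
    · intro m _
      exact mul_nonneg (Tco_nonneg hq (n + 1) m) (inner_nonneg F m)
  have hinner1 : (∑ u : Fin n → X, ∑ v : Fin n → X, F u * F v * agreeInd 1 u v) = 0 := by
    have := hterms0 1 (Finset.mem_Icc.mpr ⟨le_refl 1, by omega⟩)
    have hpos := Tco_one_pos (N := n + 1) hq (by omega)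
    exact (mul_eq_zero.mp this).resolve_left (ne_of_gt hpos)
  have hF0 : ∀ v : Fin n → X, F v = 0 := by
    rw [inner_one] at hinner1
    intro v
    have := (Finset.sum_eq_zero_iff_of_nonneg
      (fun u _ => sq_nonneg (F u))).mp hinner1 v (Finset.mem_univ v)
    exact pow_eq_zero_iff (n := 2) (by norm_num) |>.mp this
  -- characterize membership in the images
  have hApos : ∀ v : Fin n → X, v ∈ (L i).image π ↔ 0 < A v := by
    intro v
    constructor
    · intro hv
      obtain ⟨x, hx, hxv⟩ := Finset.mem_image.mp hv
      exact Finset.sum_pos' (fun x _ => by split_ifs <;> norm_num)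
        ⟨x, hx, by rw [if_pos hxv]; norm_num⟩
    · intro hv
      by_contra hc
      have : A v = 0 := Finset.sum_eq_zero fun x hx => by
        rw [if_neg]
        intro hxv
        exact hc (Finset.mem_image.mpr ⟨x, hx, hxv⟩)
      rw [this] at hv; exact lt_irrefl 0 hv
  have hBpos : ∀ v : Fin n → X, v ∈ (L j).image π ↔ 0 < B v := by
    intro v
    constructor
    · intro hv
      obtain ⟨x, hx, hxv⟩ := Finset.mem_image.mp hv
      exact Finset.sum_pos' (fun x _ => by split_ifs <;> norm_num)
        ⟨x, hx, by rw [if_pos hxv]; norm_num⟩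
    · intro hv
      by_contra hc
      have : B v = 0 := Finset.sum_eq_zero fun x hx => by
        rw [if_neg]
        intro hxv
        exact hc (Finset.mem_image.mpr ⟨x, hx, hxv⟩)
      rw [this] at hv; exact lt_irrefl 0 hv
  ext v
  have hFv := hF0 v
  rw [hF, sub_eq_zero] at hFv
  have hAB : A v * b = B v * a := by
    field_simp at hFv
    linarith [hFv]
  have hAnn : 0 ≤ A v := Finset.sum_nonneg fun x _ => by split_ifs <;> norm_num
  have hBnn : 0 ≤ B v := Finset.sum_nonneg fun x _ => by split_ifs <;> norm_num
  rw [hApos v, hBpos v]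
  constructor
  · intro h; nlinarith
  · intro h; nlinarith
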